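/- For any σ > 0, the function μ ↦ ∑_{x ∈ ℤ} exp(-(x - μ)²/(2σ²)) has strictly negative derivative at every μ ∈ (0, 1/2). -/

import Mathlib

set_option maxHeartbeats 1000000

open Real

lemma aux_le_exp {c z : ℝ} (hc : 0 < c) : z ≤ 2 / c * Real.exp (c / 2 * z) := by
  have h := Real.add_one_le_exp (c / 2 * z)
  have hp := Real.exp_pos (c / 2 * z)
  rw [div_mul_eq_mul_div, le_div_iff₀ hc]
  nlinarith

lemma summable_geom_exp {c : ℝ} (hc : 0 < c) : Summable (fun n : ℕ => Real.exp (-c * n)) := by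
  have : (fun n : ℕ => Real.exp (-c * n)) = fun n : ℕ => (Real.exp (-c)) ^ n := by
    funext n
    rw [← Real.exp_nat_mul]
    ring_nf
  rw [this]
  exact summable_geometric_of_lt_one (Real.exp_pos _).le
    (Real.exp_lt_one_iff.mpr (by linarith))

lemma nat_le_sq (n : ℕ) : (n : ℝ) ≤ (n : ℝ) ^ 2 := by
  rcases Nat.eq_zero_or_pos n with h | h
  · simp [h]
  · have : (1 : ℝ) ≤ n := by exact_mod_cast h
    nlinarith

lemma exp_sq_le {c B : ℝ} (hc : 0 < c) (hB : 0 ≤ B) (n : ℕ) :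
    Real.exp (-c * ((n : ℝ) + B) ^ 2) ≤ Real.exp (-c * n) := by
  apply Real.exp_le_exp.mpr
  have h1 := nat_le_sq n
  have key : (n : ℝ) ≤ ((n : ℝ) + B) ^ 2 := by
    nlinarith [mul_nonneg (Nat.cast_nonneg (α := ℝ) n) hB, sq_nonneg B]
  nlinarith [mul_le_mul_of_nonneg_left key hc.le]

lemma summable_poly_exp₁ {c A B : ℝ} (hc : 0 < c) (hA : 0 ≤ A) (hB : 0 ≤ B) :
    Summable (fun n : ℕ => ((n : ℝ) + A) * Real.exp (-c * ((n : ℝ) + B) ^ 2)) := by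
  refine Summable.of_nonneg_of_le (f := fun n : ℕ =>
      (2 / c * Real.exp (c / 2 * A)) * Real.exp (-(c / 2) * n)) ?_ ?_ ?_
  · intro n
    positivity
  · intro n
    have h1 : ((n : ℝ) + A) ≤ 2 / c * Real.exp (c / 2 * ((n : ℝ) + A)) := aux_le_exp hc
    have h2 := exp_sq_le hc hB n
    calc ((n : ℝ) + A) * Real.exp (-c * ((n : ℝ) + B) ^ 2)
        ≤ (2 / c * Real.exp (c / 2 * ((n : ℝ) + A))) * Real.exp (-c * n) := by
          apply mul_le_mul h1 h2 (Real.exp_pos _).le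
          positivity
      _ = (2 / c * Real.exp (c / 2 * A)) * Real.exp (-(c / 2) * n) := by
          rw [mul_assoc, mul_assoc, ← Real.exp_add, ← Real.exp_add]
          ring_nf
  · exact (summable_geom_exp (by linarith)).mul_left _

lemma summable_poly_exp₂ {c A B : ℝ} (hc : 0 < c) (hA : 0 ≤ A) (hB : 0 ≤ B) :
    Summable (fun n : ℕ => ((n : ℝ) + A) ^ 2 * Real.exp (-c * ((n : ℝ) + B) ^ 2)) := by
  refine Summable.of_nonneg_of_le (f := fun n : ℕ =>
      ((4 / c) ^ 2 * Real.exp (c / 2 * A)) * Real.exp (-(c / 2) * n)) ?_ ?_ ?_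
  · intro n
    positivity
  · intro n
    have hnA : (0 : ℝ) ≤ (n : ℝ) + A := by positivity
    have h1 : ((n : ℝ) + A) ≤ 4 / c * Real.exp (c / 4 * ((n : ℝ) + A)) := by
      have h := aux_le_exp (c := c / 2) (z := (n : ℝ) + A) (by linarith)
      have e1 : 2 / (c / 2) = 4 / c := by
        field_simp
        norm_num
      have e2 : c / 2 / 2 = c / 4 := by ring
      rwa [e1, e2] at h
    have h1' : ((n : ℝ) + A) ^ 2 ≤ (4 / c) ^ 2 * Real.exp (c / 2 * ((n : ℝ) + A)) := by
      have hsq : ((n : ℝ) + A) ^ 2 ≤ (4 / c * Real.exp (c / 4 * ((n : ℝ) + A))) ^ 2 := by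
        apply sq_le_sq' _ h1
        nlinarith [Real.exp_pos (c / 4 * ((n : ℝ) + A))]
      have hx : (4 / c * Real.exp (c / 4 * ((n : ℝ) + A))) ^ 2
          = (4 / c) ^ 2 * Real.exp (c / 2 * ((n : ℝ) + A)) := by
        rw [mul_pow, sq (Real.exp _), ← Real.exp_add]
        ring_nf
      linarith [hsq.trans_eq hx]
    have h2 := exp_sq_le hc hB n
    calc ((n : ℝ) + A) ^ 2 * Real.exp (-c * ((n : ℝ) + B) ^ 2)
        ≤ ((4 / c) ^ 2 * Real.exp (c / 2 * ((n : ℝ) + A))) * Real.exp (-c * n) := by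
          apply mul_le_mul h1' h2 (Real.exp_pos _).le
          positivity
      _ = ((4 / c) ^ 2 * Real.exp (c / 2 * A)) * Real.exp (-(c / 2) * n) := by
          rw [mul_assoc, mul_assoc, ← Real.exp_add, ← Real.exp_add]
          ring_nf
  · exact (summable_geom_exp (by linarith)).mul_left _

open Real Set

noncomputable def gg (σ : ℝ) (t : ℝ) : ℝ := t * Real.exp (-t ^ 2 / (2 * σ ^ 2))

lemma gg_hasDeriv {σ : ℝ} (hσ : 0 < σ) (t : ℝ) :
    HasDerivAt (gg σ) ((1 - t ^ 2 / σ ^ 2) * Real.exp (-t ^ 2 / (2 * σ ^ 2))) t := by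
  have h1 : HasDerivAt (fun x : ℝ => -x ^ 2 / (2 * σ ^ 2)) (-(2 * t) / (2 * σ ^ 2)) t := by
    simpa using ((hasDerivAt_pow 2 t).neg).div_const (2 * σ ^ 2)
  have h2 := h1.exp
  have h3 : HasDerivAt (gg σ) _ t := (hasDerivAt_id' t).mul h2
  convert h3 using 1
  have hs : σ ^ 2 ≠ 0 := by positivity
  field_simp
  ring

lemma gg_deriv {σ : ℝ} (hσ : 0 < σ) (t : ℝ) :
    deriv (gg σ) t = (1 - t ^ 2 / σ ^ 2) * Real.exp (-t ^ 2 / (2 * σ ^ 2)) :=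
  (gg_hasDeriv hσ t).deriv

lemma gg_anti {σ : ℝ} (hσ : 0 < σ) : StrictAntiOn (gg σ) (Set.Ici σ) := by
  apply strictAntiOn_of_deriv_neg (convex_Ici σ)
  · exact fun x _ => ((gg_hasDeriv hσ x).differentiableAt).continuousAt.continuousWithinAt
  · intro x hx
    rw [interior_Ici] at hx
    rw [gg_deriv hσ]
    apply mul_neg_of_neg_of_pos _ (Real.exp_pos _)
    have hx' : σ < x := hx
    have h2 : 1 < x ^ 2 / σ ^ 2 := by
      rw [lt_div_iff₀ (by positivity)]
      nlinarith
    linarith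

lemma gg_nonneg {σ : ℝ} {t : ℝ} (ht : 0 ≤ t) : 0 ≤ gg σ t := by
  unfold gg; positivity

lemma gg_odd (σ t : ℝ) : gg σ (-t) = -gg σ t := by
  unfold gg
  rw [neg_pow]
  ring_nf

lemma gg_deriv_bound {σ : ℝ} (hσ : 0 < σ) (n : ℕ) {t : ℝ} (ht : σ * (5 * n + 4) ≤ t) :
    |deriv (gg σ) t| ≤ 4 * Real.exp (-(5 * n + 4)) := by
  rw [gg_deriv hσ]
  have hn4 : (4 : ℝ) ≤ 5 * n + 4 := by have : (0:ℝ) ≤ n := Nat.cast_nonneg n; linarith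
  have ht0 : 0 < t := lt_of_lt_of_le (by positivity) ht
  have ht2 : σ ^ 2 * (5 * n + 4) ^ 2 ≤ t ^ 2 := by
    have := mul_le_mul ht ht (by positivity) ht0.le
    nlinarith
  have hts : (5 * (n : ℝ) + 4) ^ 2 ≤ t ^ 2 / σ ^ 2 := by
    rw [le_div_iff₀ (by positivity)]
    linarith
  have h16 : (16 : ℝ) ≤ t ^ 2 / σ ^ 2 := by nlinarith
  -- |1 - t²/σ²| ≤ t²/σ²
  have habs : |1 - t ^ 2 / σ ^ 2| ≤ t ^ 2 / σ ^ 2 := by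
    rw [abs_le]
    constructor <;> nlinarith
  -- t²/σ² ≤ 4 exp(t²/(4σ²))
  have hexp : t ^ 2 / σ ^ 2 ≤ 4 * Real.exp (t ^ 2 / (4 * σ ^ 2)) := by
    have h := Real.add_one_le_exp (t ^ 2 / (4 * σ ^ 2))
    have h4 : t ^ 2 / σ ^ 2 = 4 * (t ^ 2 / (4 * σ ^ 2)) := by ring
    nlinarith
  rw [abs_mul, Real.abs_exp]
  calc |1 - t ^ 2 / σ ^ 2| * Real.exp (-t ^ 2 / (2 * σ ^ 2))
      ≤ (4 * Real.exp (t ^ 2 / (4 * σ ^ 2))) * Real.exp (-t ^ 2 / (2 * σ ^ 2)) := by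
        apply mul_le_mul (habs.trans hexp) le_rfl (Real.exp_pos _).le (by positivity)
    _ = 4 * Real.exp (-(t ^ 2 / (4 * σ ^ 2))) := by
        rw [mul_assoc, ← Real.exp_add]
        ring_nf
    _ ≤ 4 * Real.exp (-(5 * n + 4)) := by
        have : (5 * (n : ℝ) + 4) ≤ t ^ 2 / (4 * σ ^ 2) := by
          have : (5 * (n : ℝ) + 4) * 4 ≤ (5 * n + 4) ^ 2 := by nlinarith
          rw [le_div_iff₀ (by positivity)]
          nlinarith
        have := Real.exp_le_exp.mpr (neg_le_neg this)
        linarith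

lemma exp_arg_eq (σ : ℝ) (x : ℝ) :
    Real.exp (-(1 / (2 * σ ^ 2)) * x ^ 2) = Real.exp (-x ^ 2 / (2 * σ ^ 2)) := by
  congr 1
  ring

lemma summable_gg_nat {σ a : ℝ} (hσ : 0 < σ) (ha : 0 ≤ a) :
    Summable (fun n : ℕ => gg σ ((n : ℝ) + a)) := by
  have h := summable_poly_exp₁ (c := 1 / (2 * σ ^ 2)) (A := a) (B := a) (by positivity) ha ha
  exact h.congr fun n => by unfold gg; rw [exp_arg_eq]

lemma core_real {σ μ : ℝ} (hσ : 0 < σ) (hσ5 : σ ≤ 1 / 5) (hμ0 : 0 < μ) (hμ2 : μ < 1 / 2) :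
    ∑' x : ℤ, (((x : ℝ) - μ) * Real.exp (-((x : ℝ) - μ) ^ 2 / (2 * σ ^ 2))) < 0 := by
  set G : ℤ → ℝ := fun x => gg σ ((x : ℝ) - μ) with hG
  have hGe : (fun x : ℤ => ((x : ℝ) - μ) * Real.exp (-((x : ℝ) - μ) ^ 2 / (2 * σ ^ 2))) = G := rfl
  rw [hGe]
  have S1 : Summable (fun n : ℕ => gg σ ((n : ℝ) + (1 - μ))) := summable_gg_nat hσ (by linarith)
  have S2 : Summable (fun n : ℕ => gg σ ((n : ℝ) + (1 + μ))) := summable_gg_nat hσ (by linarith)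
  have S3 : Summable (fun n : ℕ => gg σ ((n : ℝ) + (2 - μ))) := summable_gg_nat hσ (by linarith)
  have S4 : Summable (fun n : ℕ => gg σ ((n : ℝ) + (3 - μ))) := summable_gg_nat hσ (by linarith)
  have hnegarg : ∀ n : ℕ, ((-((n : ℤ) + 1) : ℤ) : ℝ) - μ = -(((n : ℝ) + (1 + μ))) := by
    intro n; push_cast; ring
  have h₁ : Summable (fun n : ℕ => G ((n : ℤ) + 1)) := by
    refine S1.congr fun n => ?_
    simp only [hG]
    congr 1
    push_cast
    ring
  have h₂ : Summable (fun n : ℕ => G (-((n : ℤ) + 1))) := by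
    refine (S2.neg).congr fun n => ?_
    simp only [hG]
    rw [hnegarg n, gg_odd]
  have hsplit := tsum_of_add_one_of_neg_add_one (f := G) h₁ h₂
  have e₁ : ∑' n : ℕ, G ((n : ℤ) + 1) = ∑' n : ℕ, gg σ ((n : ℝ) + (1 - μ)) := by
    refine tsum_congr fun n => ?_
    simp only [hG]
    congr 1
    push_cast
    ring
  have e₂ : ∑' n : ℕ, G (-((n : ℤ) + 1)) = -∑' n : ℕ, gg σ ((n : ℝ) + (1 + μ)) := by
    rw [← tsum_neg]
    refine tsum_congr fun n => ?_
    simp only [hG]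
    rw [hnegarg n, gg_odd]
  have e₀ : G (0 : ℤ) = -gg σ μ := by
    simp only [hG]
    have h00 : ((0 : ℤ) : ℝ) - μ = -μ := by push_cast; ring
    rw [h00, gg_odd]
  set D : ℕ → ℝ := fun n => gg σ ((n : ℝ) + (1 - μ)) - gg σ ((n : ℝ) + (1 + μ)) with hD
  have SD : Summable D := S1.sub S2
  have keysub : ∑' n : ℕ, D n
      = (∑' n : ℕ, gg σ ((n : ℝ) + (1 - μ))) - ∑' n : ℕ, gg σ ((n : ℝ) + (1 + μ)) :=
    Summable.tsum_sub S1 S2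
  have main : ∑' n : ℕ, D n < gg σ μ := by
    rcases lt_or_ge μ σ with hcase | hcase
    · -- μ < σ : Lipschitz bound
      have bound : ∀ n : ℕ, D n ≤ 2 * μ * (4 * Real.exp (-(5 * (n : ℝ) + 4))) := by
        intro n
        have hn0 : (0 : ℝ) ≤ n := Nat.cast_nonneg n
        have hmvt := Convex.norm_image_sub_le_of_norm_deriv_le (𝕜 := ℝ) (f := gg σ)
          (s := Icc ((n : ℝ) + 1 - σ) ((n : ℝ) + 1 + σ))
          (fun x _ => (gg_hasDeriv hσ x).differentiableAt)
          (C := 4 * Real.exp (-(5 * (n : ℝ) + 4)))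
          (fun x hx => by
            rw [Real.norm_eq_abs]
            apply gg_deriv_bound hσ n
            have hx1 := hx.1
            nlinarith)
          (convex_Icc _ _)
          (x := (n : ℝ) + (1 + μ))
          (⟨by nlinarith, by nlinarith⟩)
          (y := (n : ℝ) + (1 - μ))
          (⟨by nlinarith, by nlinarith⟩)
        rw [Real.norm_eq_abs, Real.norm_eq_abs] at hmvt
        have habs : |((n : ℝ) + (1 - μ)) - ((n : ℝ) + (1 + μ))| = 2 * μ := by
          rw [abs_of_nonpos (by linarith)]
          ring
        rw [habs] at hmvt
        calc D n ≤ |gg σ ((n : ℝ) + (1 - μ)) - gg σ ((n : ℝ) + (1 + μ))| := le_abs_self _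
          _ ≤ 4 * Real.exp (-(5 * (n : ℝ) + 4)) * (2 * μ) := hmvt
          _ = 2 * μ * (4 * Real.exp (-(5 * (n : ℝ) + 4))) := by ring
      have egeo : (fun n : ℕ => 2 * μ * (4 * Real.exp (-(5 * (n : ℝ) + 4))))
          = fun n : ℕ => (8 * μ * Real.exp (-4)) * (Real.exp (-5)) ^ n := by
        funext n
        have harg : -(5 * (n : ℝ) + 4) = (n : ℕ) * (-5 : ℝ) + (-4) := by push_cast; ring
        rw [harg, Real.exp_add, Real.exp_nat_mul]
        ring
      have hr5 : Real.exp (-5 : ℝ) < 1 := Real.exp_lt_one_iff.mpr (by norm_num)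
      have hgeo : Summable (fun n : ℕ => 2 * μ * (4 * Real.exp (-(5 * (n : ℝ) + 4)))) := by
        rw [egeo]
        exact (summable_geometric_of_lt_one (Real.exp_pos _).le hr5).mul_left _
      have hsum_le : ∑' n : ℕ, D n ≤ ∑' n : ℕ, 2 * μ * (4 * Real.exp (-(5 * (n : ℝ) + 4))) :=
        Summable.tsum_le_tsum bound SD hgeo
      have hval : ∑' n : ℕ, 2 * μ * (4 * Real.exp (-(5 * (n : ℝ) + 4)))
          = (8 * μ * Real.exp (-4)) * (1 - Real.exp (-5))⁻¹ := by
        rw [egeo, tsum_mul_left, tsum_geometric_of_lt_one (Real.exp_pos _).le hr5]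
      have hexp5 : Real.exp (-5 : ℝ) ≤ 1 / 2 := by
        have h1 : Real.exp (-5 : ℝ) ≤ Real.exp (-1) := Real.exp_le_exp.mpr (by norm_num)
        have h2 : Real.exp (-1 : ℝ) = (Real.exp 1)⁻¹ := Real.exp_neg 1
        have he := Real.exp_one_gt_d9
        have h3 : (Real.exp 1)⁻¹ ≤ 1 / 2 := by
          rw [inv_le_comm₀ (by positivity) (by norm_num)]
          norm_num
          linarith
        linarith [h1.trans_eq h2]
      have hexp4 : Real.exp (-4 : ℝ) ≤ 1 / 32 := by
        have h4 : (32 : ℝ) ≤ Real.exp 4 := by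
          have h44 : Real.exp (4 : ℝ) = (Real.exp 1) ^ (4 : ℕ) := by
            rw [← Real.exp_nat_mul]
            norm_num
          rw [h44]
          have he := Real.exp_one_gt_d9
          have h27 : (2.7 : ℝ) ≤ Real.exp 1 := by linarith
          have hp := pow_le_pow_left₀ (by norm_num : (0:ℝ) ≤ 2.7) h27 4
          nlinarith
        rw [Real.exp_neg]
        rw [inv_le_comm₀ (Real.exp_pos 4) (by norm_num)]
        linarith
      have hinv : (1 - Real.exp (-5 : ℝ))⁻¹ ≤ 2 := by
        rw [inv_le_comm₀ (by linarith [Real.exp_pos (-5 : ℝ)]) (by norm_num)]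
        linarith
      have hfinal : (8 * μ * Real.exp (-4)) * (1 - Real.exp (-5))⁻¹ ≤ μ / 2 := by
        have h1 : (0 : ℝ) ≤ 8 * μ * Real.exp (-4) := by positivity
        have h2 : (8 * μ * Real.exp (-4)) * (1 - Real.exp (-5))⁻¹ ≤ (8 * μ * Real.exp (-4)) * 2 :=
          mul_le_mul_of_nonneg_left hinv h1
        nlinarith [Real.exp_pos (-4 : ℝ)]
      have hgg : μ / 2 < gg σ μ := by
        unfold gg
        have hx : μ ^ 2 / (2 * σ ^ 2) < 1 / 2 := by
          rw [div_lt_iff₀ (by positivity)]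
          nlinarith
        have hexp := Real.add_one_le_exp (-(μ ^ 2 / (2 * σ ^ 2)))
        have h5 : (1 : ℝ) / 2 < Real.exp (-(μ ^ 2 / (2 * σ ^ 2))) := by linarith
        have harg : -μ ^ 2 / (2 * σ ^ 2) = -(μ ^ 2 / (2 * σ ^ 2)) := by ring
        rw [harg]
        nlinarith
      linarith [hsum_le.trans_eq hval, hfinal]
    · -- σ ≤ μ : monotonicity + telescoping
      have hanti := gg_anti hσ
      set h : ℕ → ℝ := fun n => gg σ ((n : ℝ) + (2 - μ)) with hh
      have SD1 : Summable (fun n : ℕ => D (n + 1)) := by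
        exact (summable_nat_add_iff 1).mpr SD
      have SE : Summable (fun n : ℕ => h n - h (n + 1)) := by
        apply S3.sub
        exact ((summable_nat_add_iff 1).mpr S3).congr fun n => by simp [hh]
      have bound2 : ∀ n : ℕ, D (n + 1) ≤ h n - h (n + 1) := by
        intro n
        have hn0 : (0 : ℝ) ≤ n := Nat.cast_nonneg n
        have hc1 : ((n + 1 : ℕ) : ℝ) + (1 - μ) = (n : ℝ) + (2 - μ) := by push_cast; ring
        have hc2 : ((n + 1 : ℕ) : ℝ) + (1 + μ) = (n : ℝ) + (2 + μ) := by push_cast; ring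
        have hc3 : ((n + 1 : ℕ) : ℝ) + (2 - μ) = (n : ℝ) + (3 - μ) := by push_cast; ring
        simp only [hD, hh, hc1, hc2, hc3]
        have hlt : gg σ ((n : ℝ) + (3 - μ)) < gg σ ((n : ℝ) + (2 + μ)) := by
          apply hanti
          · exact mem_Ici.mpr (by nlinarith)
          · exact mem_Ici.mpr (by nlinarith)
          · nlinarith
        linarith
      have hstep1 : ∑' n : ℕ, D (n + 1) ≤ ∑' n : ℕ, (h n - h (n + 1)) :=
        Summable.tsum_le_tsum bound2 SD1 SE
      have htel : ∑' n : ℕ, (h n - h (n + 1)) ≤ h 0 := by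
        apply Summable.tsum_le_of_sum_range_le SE
        intro N
        rw [Finset.sum_range_sub' h N]
        have : 0 ≤ h N := gg_nonneg (by
          have hn0 : (0 : ℝ) ≤ (N : ℝ) := Nat.cast_nonneg N
          nlinarith)
        linarith
      have hzero : ∑' n : ℕ, D n = D 0 + ∑' n : ℕ, D (n + 1) := Summable.tsum_eq_zero_add SD
      have hD0 : D 0 = gg σ (1 - μ) - gg σ (1 + μ) := by
        simp only [hD]
        norm_num
      have hg2 : gg σ (2 - μ) < gg σ (1 + μ) := by
        apply hanti
        · exact mem_Ici.mpr (by nlinarith)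
        · exact mem_Ici.mpr (by nlinarith)
        · nlinarith
      have hg1 : gg σ (1 - μ) < gg σ μ := by
        apply hanti
        · exact mem_Ici.mpr hcase
        · exact mem_Ici.mpr (by nlinarith)
        · nlinarith
      have hh0 : h 0 = gg σ (2 - μ) := by simp [hh]
      calc ∑' n : ℕ, D n = D 0 + ∑' n : ℕ, D (n + 1) := hzero
        _ ≤ D 0 + h 0 := by linarith [hstep1.trans htel]
        _ = gg σ (1 - μ) - gg σ (1 + μ) + gg σ (2 - μ) := by rw [hD0, hh0]
        _ < gg σ μ := by linarith
  rw [hsplit, e₁, e₂, e₀]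
  linarith [keysub, main]

lemma term_hasDeriv {σ : ℝ} (hσ : 0 < σ) (r m : ℝ) :
    HasDerivAt (fun y : ℝ => Real.exp (-(r - y) ^ 2 / (2 * σ ^ 2)))
      ((r - m) / σ ^ 2 * Real.exp (-(r - m) ^ 2 / (2 * σ ^ 2))) m := by
  have h0 : HasDerivAt (fun y : ℝ => r - y) (-1) m := by
    simpa using (hasDerivAt_id m).const_sub r
  have h1 := h0.pow 2
  have h2 : HasDerivAt (fun y : ℝ => -(r - y) ^ 2 / (2 * σ ^ 2))
      (-((2 : ℕ) * (r - m) ^ 1 * (-1)) / (2 * σ ^ 2)) m := by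
    simpa [neg_div, Pi.neg_def] using (h1.div_const (2 * σ ^ 2)).neg
  have h3 := h2.exp
  convert h3 using 1
  have hs : σ ^ 2 ≠ 0 := by positivity
  field_simp
  ring

lemma sq_shift_bound {m r : ℝ} (hm1 : -1 < m) (hm2 : m < 1) :
    -(r - m) ^ 2 / 2 ≤ -(r ^ 2 / 2 - 2) / 2 := by
  nlinarith [sq_nonneg (r - 2 * m), mul_pos (by linarith : (0:ℝ) < 1 - m)
    (by linarith : (0:ℝ) < 1 + m)]

lemma exp_shift_bound {σ m r : ℝ} (hσ : 0 < σ) (hm1 : -1 < m) (hm2 : m < 1) :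
    Real.exp (-(r - m) ^ 2 / (2 * σ ^ 2))
      ≤ Real.exp (1 / σ ^ 2) * Real.exp (-r ^ 2 / (4 * σ ^ 2)) := by
  rw [← Real.exp_add]
  apply Real.exp_le_exp.mpr
  have key2 : -2 * (r - m) ^ 2 ≤ 4 - r ^ 2 := by
    nlinarith [sq_nonneg (r - 2 * m), mul_pos (by linarith : (0:ℝ) < 1 - m)
      (by linarith : (0:ℝ) < 1 + m)]
  have hs : (0 : ℝ) < σ ^ 2 := by positivity
  calc -(r - m) ^ 2 / (2 * σ ^ 2) = (-2 * (r - m) ^ 2) / (4 * σ ^ 2) := by ring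
    _ ≤ (4 - r ^ 2) / (4 * σ ^ 2) := by gcongr
    _ = 1 / σ ^ 2 + -r ^ 2 / (4 * σ ^ 2) := by
        field_simp
        ring

lemma SU {σ : ℝ} (hσ : 0 < σ) :
    Summable (fun x : ℤ => (|(x : ℝ)| + 1) * Real.exp (-(x : ℝ) ^ 2 / (4 * σ ^ 2))) := by
  have hc : (0 : ℝ) < 1 / (4 * σ ^ 2) := by positivity
  apply Summable.of_nat_of_neg_add_one
  · refine (summable_poly_exp₁ (c := 1 / (4 * σ ^ 2)) (A := 1) (B := 0) hc (by norm_num)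
      le_rfl).congr fun n => ?_
    have h1 : |((n : ℤ) : ℝ)| = (n : ℝ) := by
      rw [Int.cast_natCast, abs_of_nonneg (Nat.cast_nonneg n)]
    rw [h1]
    congr 1
    push_cast
    ring
  · refine (summable_poly_exp₁ (c := 1 / (4 * σ ^ 2)) (A := 2) (B := 1) hc (by norm_num)
      (by norm_num)).congr fun n => ?_
    have h1 : |((-((n : ℤ) + 1) : ℤ) : ℝ)| = (n : ℝ) + 1 := by
      push_cast
      rw [abs_neg, abs_of_nonneg (by positivity)]
    rw [h1]
    have h2 : ((-((n : ℤ) + 1) : ℤ) : ℝ) ^ 2 = ((n : ℝ) + 1) ^ 2 := by push_cast; ring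
    rw [h2]
    congr 1
    · push_cast; ring
    · ring
  
lemma summable_at {σ : ℝ} (hσ : 0 < σ) {m : ℝ} (hm1 : -1 < m) (hm2 : m < 1) :
    Summable (fun x : ℤ => Real.exp (-((x : ℝ) - m) ^ 2 / (2 * σ ^ 2))) := by
  refine Summable.of_nonneg_of_le (f := fun x : ℤ =>
      Real.exp (1 / σ ^ 2) * ((|(x : ℝ)| + 1) * Real.exp (-(x : ℝ) ^ 2 / (4 * σ ^ 2))))
    (fun x => (Real.exp_pos _).le) (fun x => ?_) ((SU hσ).mul_left _)
  have h1 := exp_shift_bound (σ := σ) (r := (x : ℝ)) hσ hm1 hm2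
  have h2 : Real.exp (-(x : ℝ) ^ 2 / (4 * σ ^ 2))
      ≤ (|(x : ℝ)| + 1) * Real.exp (-(x : ℝ) ^ 2 / (4 * σ ^ 2)) := by
    nlinarith [Real.exp_pos (-(x : ℝ) ^ 2 / (4 * σ ^ 2)), abs_nonneg ((x : ℝ))]
  calc Real.exp (-((x : ℝ) - m) ^ 2 / (2 * σ ^ 2))
      ≤ Real.exp (1 / σ ^ 2) * Real.exp (-(x : ℝ) ^ 2 / (4 * σ ^ 2)) := h1
    _ ≤ Real.exp (1 / σ ^ 2) * ((|(x : ℝ)| + 1) * Real.exp (-(x : ℝ) ^ 2 / (4 * σ ^ 2))) := by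
        exact mul_le_mul_of_nonneg_left h2 (Real.exp_pos _).le

lemma deriv_tsum_real {σ : ℝ} (hσ : 0 < σ) {μ : ℝ} (hμ1 : -1 < μ) (hμ2 : μ < 1) :
    HasDerivAt (fun m : ℝ => ∑' x : ℤ, Real.exp (-((x : ℝ) - m) ^ 2 / (2 * σ ^ 2)))
      (∑' x : ℤ, ((x : ℝ) - μ) / σ ^ 2 * Real.exp (-((x : ℝ) - μ) ^ 2 / (2 * σ ^ 2))) μ := by
  have hu : Summable (fun x : ℤ =>
      (Real.exp (1 / σ ^ 2) / σ ^ 2) * ((|(x : ℝ)| + 1) * Real.exp (-(x : ℝ) ^ 2 / (4 * σ ^ 2)))) :=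
    (SU hσ).mul_left _
  refine hasDerivAt_tsum_of_isPreconnected hu isOpen_Ioo
    (convex_Ioo (-1 : ℝ) 1).isPreconnected
    (fun x y _ => term_hasDeriv hσ ((x : ℝ)) y)
    (fun x y hy => ?_) (Set.mem_Ioo.mpr ⟨hμ1, hμ2⟩)
    (summable_at hσ hμ1 hμ2) (Set.mem_Ioo.mpr ⟨hμ1, hμ2⟩)
  -- bound
  obtain ⟨hy1, hy2⟩ := Set.mem_Ioo.mp hy
  rw [Real.norm_eq_abs, abs_mul, abs_div]
  have hxy : |(x : ℝ) - y| ≤ |(x : ℝ)| + 1 := by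
    calc |(x : ℝ) - y| ≤ |(x : ℝ)| + |y| := abs_sub _ _
      _ ≤ |(x : ℝ)| + 1 := by
          have : |y| ≤ 1 := abs_le.mpr ⟨by linarith, by linarith⟩
          linarith
  have hsq : |σ ^ 2| = σ ^ 2 := abs_of_pos (by positivity)
  have hexp := exp_shift_bound (σ := σ) (r := (x : ℝ)) hσ hy1 hy2
  rw [Real.abs_exp, hsq]
  have hs2 : (0 : ℝ) < σ ^ 2 := by positivity
  calc |(x : ℝ) - y| / σ ^ 2 * Real.exp (-((x : ℝ) - y) ^ 2 / (2 * σ ^ 2))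
      ≤ (|(x : ℝ)| + 1) / σ ^ 2 *
        (Real.exp (1 / σ ^ 2) * Real.exp (-(x : ℝ) ^ 2 / (4 * σ ^ 2))) := by
        have hdiv : |(x : ℝ) - y| / σ ^ 2 ≤ (|(x : ℝ)| + 1) / σ ^ 2 := by gcongr
        exact mul_le_mul hdiv hexp (Real.exp_pos _).le (by positivity)
    _ = (Real.exp (1 / σ ^ 2) / σ ^ 2) *
        ((|(x : ℝ)| + 1) * Real.exp (-(x : ℝ) ^ 2 / (4 * σ ^ 2))) := by ring

open Complex in
lemma summable_exp_int {K : ℝ} (hK : 0 < K) :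
    Summable (fun n : ℤ => Real.exp (-K * (n : ℝ) ^ 2)) := by
  apply Summable.of_nat_of_neg_add_one
  · refine Summable.of_nonneg_of_le (f := fun n : ℕ => ((n : ℝ) + 1) * Real.exp (-K * ((n : ℝ) + 0) ^ 2))
      (fun n => (Real.exp_pos _).le) (fun n => ?_)
      (summable_poly_exp₁ hK (by norm_num) le_rfl)
    have h : Real.exp (-K * (((n : ℤ) : ℝ)) ^ 2) = Real.exp (-K * ((n : ℝ) + 0) ^ 2) := by
      push_cast; ring_nf
    rw [h]
    beta_reduce
    nlinarith [Real.exp_pos (-K * ((n : ℝ) + 0) ^ 2), Nat.cast_nonneg (α := ℝ) n]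
  · refine Summable.of_nonneg_of_le (f := fun n : ℕ => ((n : ℝ) + 1) * Real.exp (-K * ((n : ℝ) + 1) ^ 2))
      (fun n => (Real.exp_pos _).le) (fun n => ?_)
      (summable_poly_exp₁ hK (by norm_num) (by norm_num))
    have h : Real.exp (-K * (((-((n : ℤ) + 1) : ℤ) : ℝ)) ^ 2) = Real.exp (-K * ((n : ℝ) + 1) ^ 2) := by
      push_cast; ring_nf
    rw [h]
    beta_reduce
    nlinarith [Real.exp_pos (-K * ((n : ℝ) + 1) ^ 2), Nat.cast_nonneg (α := ℝ) n]

open Complex in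
lemma poisson {σ : ℝ} (hσ : 0 < σ) {m : ℝ} (hm1 : -1 < m) (hm2 : m < 1) :
    ∑' x : ℤ, Real.exp (-((x : ℝ) - m) ^ 2 / (2 * σ ^ 2))
      = Real.sqrt (2 * Real.pi * σ ^ 2) *
        ∑' n : ℤ, Real.exp (-(2 * Real.pi ^ 2 * σ ^ 2) * (n : ℝ) ^ 2)
          * Real.cos (2 * Real.pi * (n : ℝ) * m) := by
  have hπ := Real.pi_pos
  set a : ℂ := ((2 * Real.pi * σ ^ 2 : ℝ) : ℂ) with ha_def
  have hapos : (0 : ℝ) < 2 * Real.pi * σ ^ 2 := by positivity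
  have ha : 0 < a.re := by rw [ha_def, Complex.ofReal_re]; exact hapos
  have key := Complex.tsum_exp_neg_quadratic ha ((m : ℂ) * Complex.I)
  -- identify the gaussian side with the real sum
  have e1 : ∀ n : ℤ, Complex.exp (-(Real.pi : ℂ) / a * ((n : ℂ) + Complex.I * ((m : ℂ) * Complex.I)) ^ 2)
      = ((Real.exp (-((n : ℝ) - m) ^ 2 / (2 * σ ^ 2)) : ℝ) : ℂ) := by
    intro n
    rw [Complex.ofReal_exp]
    congr 1
    have hIm : Complex.I * ((m : ℂ) * Complex.I) = -(m : ℂ) := by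
      rw [mul_comm ((m : ℂ)), ← mul_assoc, Complex.I_mul_I]; ring
    rw [hIm, ha_def]
    have hπ0 : (Real.pi : ℂ) ≠ 0 := by
      exact_mod_cast Real.pi_ne_zero
    have hσc : (σ : ℂ) ≠ 0 := by exact_mod_cast hσ.ne'
    have hσ0 : ((σ : ℂ)) ^ 2 ≠ 0 := pow_ne_zero 2 hσc
    push_cast
    field_simp
    ring
  -- the frequency-side exponent in standard form
  have hre : ∀ x y : ℝ, ((x : ℂ) + (y : ℂ) * Complex.I).re = x := fun x y => by simp
  have him : ∀ x y : ℝ, ((x : ℂ) + (y : ℂ) * Complex.I).im = y := fun x y => by simp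
  have hz : ∀ n : ℤ, (-(Real.pi : ℂ) * a * (n : ℂ) ^ 2 + 2 * (Real.pi : ℂ) * ((m : ℂ) * Complex.I) * (n : ℂ))
      = ((-(2 * Real.pi ^ 2 * σ ^ 2) * (n : ℝ) ^ 2 : ℝ) : ℂ)
        + ((2 * Real.pi * (n : ℝ) * m : ℝ) : ℂ) * Complex.I := by
    intro n
    rw [ha_def]
    push_cast
    ring
  have SC : Summable (fun n : ℤ => Complex.exp (-(Real.pi : ℂ) * a * (n : ℂ) ^ 2
      + 2 * (Real.pi : ℂ) * ((m : ℂ) * Complex.I) * (n : ℂ))) := by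
    apply Summable.of_norm
    refine (summable_exp_int (K := 2 * Real.pi ^ 2 * σ ^ 2) (by positivity)).congr fun n => ?_
    rw [hz n, Complex.norm_exp, hre]
  -- a ^ (1/2) = sqrt
  have hcpow : a ^ (1 / 2 : ℂ) = ((Real.sqrt (2 * Real.pi * σ ^ 2) : ℝ) : ℂ) := by
    rw [ha_def, Real.sqrt_eq_rpow, Complex.ofReal_cpow hapos.le]
    norm_num
  have hsqrt_pos : 0 < Real.sqrt (2 * Real.pi * σ ^ 2) := Real.sqrt_pos.mpr hapos
  have hs0 : ((Real.sqrt (2 * Real.pi * σ ^ 2) : ℝ) : ℂ) ≠ 0 := by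
    exact_mod_cast hsqrt_pos.ne'
  -- turn key around
  have key2 : ((∑' x : ℤ, Real.exp (-((x : ℝ) - m) ^ 2 / (2 * σ ^ 2)) : ℝ) : ℂ)
      = ((Real.sqrt (2 * Real.pi * σ ^ 2) : ℝ) : ℂ)
        * ∑' n : ℤ, Complex.exp (-(Real.pi : ℂ) * a * (n : ℂ) ^ 2
            + 2 * (Real.pi : ℂ) * ((m : ℂ) * Complex.I) * (n : ℂ)) := by
    rw [Complex.ofReal_tsum]
    have : ∀ n : ℤ, ((Real.exp (-((n : ℝ) - m) ^ 2 / (2 * σ ^ 2)) : ℝ) : ℂ)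
        = Complex.exp (-(Real.pi : ℂ) / a * ((n : ℂ) + Complex.I * ((m : ℂ) * Complex.I)) ^ 2) :=
      fun n => (e1 n).symm
    rw [tsum_congr this, key, hcpow]
    conv_rhs => rw [← mul_assoc]
    rw [mul_one_div, div_self hs0, one_mul]
  -- take real parts
  have := congrArg Complex.re key2
  rw [Complex.ofReal_re, Complex.re_ofReal_mul, Complex.re_tsum SC] at this
  rw [this]
  congr 1
  refine tsum_congr fun n => ?_
  rw [hz n, Complex.exp_re, hre, him]

open Real in
lemma summable_u_fourier {K : ℝ} (hK : 0 < K) :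
    Summable (fun n : ℤ => Real.exp (-K * (n : ℝ) ^ 2) * (2 * π * |(n : ℝ)|)) := by
  apply Summable.of_nat_of_neg_add_one
  · refine ((summable_poly_exp₁ (c := K) (A := 0) (B := 0) hK le_rfl le_rfl).mul_left
      (2 * π)).congr fun n => ?_
    have h1 : |((n : ℤ) : ℝ)| = (n : ℝ) := by
      rw [Int.cast_natCast, abs_of_nonneg (Nat.cast_nonneg n)]
    rw [h1]
    have h2 : (((n : ℤ) : ℝ)) ^ 2 = ((n : ℝ) + 0) ^ 2 := by push_cast; ring
    rw [h2]
    ring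
  · refine ((summable_poly_exp₁ (c := K) (A := 1) (B := 1) hK (by norm_num)
      (by norm_num)).mul_left (2 * π)).congr fun n => ?_
    have h1 : |((-((n : ℤ) + 1) : ℤ) : ℝ)| = (n : ℝ) + 1 := by
      push_cast
      rw [abs_neg, abs_of_nonneg (by positivity)]
    rw [h1]
    have h2 : (((-((n : ℤ) + 1) : ℤ) : ℝ)) ^ 2 = ((n : ℝ) + 1) ^ 2 := by push_cast; ring
    rw [h2]
    ring

open Real in
lemma summable_fourier_at {K : ℝ} (hK : 0 < K) (m : ℝ) :
    Summable (fun n : ℤ => Real.exp (-K * (n : ℝ) ^ 2) * Real.cos (2 * π * (n : ℝ) * m)) := by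
  apply Summable.of_norm
  refine Summable.of_nonneg_of_le (f := fun n : ℤ => Real.exp (-K * (n : ℝ) ^ 2))
    (fun n => norm_nonneg _) (fun n => ?_) (summable_exp_int hK)
  rw [Real.norm_eq_abs, abs_mul, Real.abs_exp]
  have h1 : |Real.cos (2 * π * (n : ℝ) * m)| ≤ 1 := Real.abs_cos_le_one _
  nlinarith [Real.exp_pos (-K * (n : ℝ) ^ 2), abs_nonneg (Real.cos (2 * π * (n : ℝ) * m))]

open Real in
lemma deriv_tsum_fourier {σ : ℝ} (hσ : 0 < σ) (μ : ℝ) :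
    HasDerivAt (fun m : ℝ => ∑' n : ℤ,
        Real.exp (-(2 * π ^ 2 * σ ^ 2) * (n : ℝ) ^ 2) * Real.cos (2 * π * (n : ℝ) * m))
      (∑' n : ℤ, Real.exp (-(2 * π ^ 2 * σ ^ 2) * (n : ℝ) ^ 2)
        * (-Real.sin (2 * π * (n : ℝ) * μ) * (2 * π * (n : ℝ)))) μ := by
  have hK : (0 : ℝ) < 2 * π ^ 2 * σ ^ 2 := by positivity
  refine hasDerivAt_tsum (u := fun n : ℤ =>
      Real.exp (-(2 * π ^ 2 * σ ^ 2) * (n : ℝ) ^ 2) * (2 * π * |(n : ℝ)|))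
    (g := fun (n : ℤ) (m : ℝ) =>
      Real.exp (-(2 * π ^ 2 * σ ^ 2) * (n : ℝ) ^ 2) * Real.cos (2 * π * (n : ℝ) * m))
    (g' := fun (n : ℤ) (y : ℝ) => Real.exp (-(2 * π ^ 2 * σ ^ 2) * (n : ℝ) ^ 2)
        * (-Real.sin (2 * π * (n : ℝ) * y) * (2 * π * (n : ℝ))))
    (summable_u_fourier hK) (fun n y => ?_) (fun n y => ?_)
    (summable_fourier_at hK μ) μ
  · have hinner : HasDerivAt (fun m : ℝ => 2 * π * (n : ℝ) * m) (2 * π * (n : ℝ)) y := by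
      simpa using (hasDerivAt_id y).const_mul (2 * π * (n : ℝ))
    exact (hinner.cos).const_mul _
  · rw [Real.norm_eq_abs, abs_mul, Real.abs_exp, abs_mul]
    apply mul_le_mul_of_nonneg_left _ (Real.exp_pos _).le
    have h1 : |(-Real.sin (2 * π * (n : ℝ) * y))| ≤ 1 := by
      rw [abs_neg]; exact Real.abs_sin_le_one _
    have h2 : |2 * π * (n : ℝ)| = 2 * π * |(n : ℝ)| := by
      rw [abs_mul, abs_of_pos (by positivity : (0:ℝ) < 2 * π)]
    rw [h2]
    have h3 : (0:ℝ) ≤ 2 * π * |(n : ℝ)| := by positivity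
    calc |(-Real.sin (2 * π * (n : ℝ) * y))| * (2 * π * |(n : ℝ)|)
        ≤ 1 * (2 * π * |(n : ℝ)|) := mul_le_mul_of_nonneg_right h1 h3
      _ = 2 * π * |(n : ℝ)| := one_mul _

lemma sin_bound (θ : ℝ) : ∀ j : ℕ, |Real.sin ((j : ℝ) * θ)| ≤ (j : ℝ) * |Real.sin θ| := by
  intro j
  induction j with
  | zero => simp
  | succ n ih =>
    have harg : (((n + 1 : ℕ)) : ℝ) * θ = (n : ℝ) * θ + θ := by push_cast; ring
    rw [harg, Real.sin_add]
    calc |Real.sin ((n : ℝ) * θ) * Real.cos θ + Real.cos ((n : ℝ) * θ) * Real.sin θ|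
        ≤ |Real.sin ((n : ℝ) * θ) * Real.cos θ| + |Real.cos ((n : ℝ) * θ) * Real.sin θ| :=
          abs_add_le _ _
      _ ≤ |Real.sin ((n : ℝ) * θ)| + |Real.sin θ| := by
          rw [abs_mul, abs_mul]
          have h1 := Real.abs_cos_le_one θ
          have h2 := Real.abs_cos_le_one ((n : ℝ) * θ)
          nlinarith [abs_nonneg (Real.sin ((n : ℝ) * θ)), abs_nonneg (Real.sin θ),
            abs_nonneg (Real.cos ((n : ℝ) * θ)), abs_nonneg (Real.cos θ)]
      _ ≤ (n : ℝ) * |Real.sin θ| + |Real.sin θ| := by linarith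
      _ = (((n + 1 : ℕ)) : ℝ) * |Real.sin θ| := by push_cast; ring

lemma pow4_bound : ∀ n : ℕ, ((n : ℝ) + 2) ^ 2 ≤ 4 ^ (n + 1) := by
  intro n
  induction n with
  | zero => norm_num
  | succ m ih =>
    have h1 : (((m + 1 : ℕ)) : ℝ) + 2 = ((m : ℝ) + 2) + 1 := by push_cast; ring
    rw [h1]
    have hm : (0 : ℝ) ≤ (m : ℝ) := Nat.cast_nonneg m
    have h2 : (((m : ℝ) + 2) + 1) ^ 2 ≤ 4 * ((m : ℝ) + 2) ^ 2 := by nlinarith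
    calc (((m : ℝ) + 2) + 1) ^ 2 ≤ 4 * ((m : ℝ) + 2) ^ 2 := h2
      _ ≤ 4 * 4 ^ (m + 1) := by linarith
      _ = 4 ^ (m + 1 + 1) := by ring

open Real in
lemma rho_lt {K : ℝ} (hK0 : 2 * π ^ 2 / 25 ≤ K) : 4 * Real.exp (-(3 * K)) < 1 / 2 := by
  have hpi := Real.pi_gt_d6
  have h1 : (2.36 : ℝ) ≤ 3 * K := by nlinarith
  have h2 : (8 : ℝ) < Real.exp 2.36 := by
    have e2 : Real.exp (2.36 : ℝ) = Real.exp 2 * Real.exp 0.36 := by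
      rw [← Real.exp_add]; norm_num
    have e3 : Real.exp (2 : ℝ) = Real.exp 1 ^ (2 : ℕ) := by
      rw [← Real.exp_nat_mul]; norm_num
    have he := Real.exp_one_gt_d9
    have h036 : (1.36 : ℝ) ≤ Real.exp 0.36 := by
      have := Real.add_one_le_exp (0.36 : ℝ); linarith
    rw [e2, e3]
    nlinarith [Real.exp_pos (0.36 : ℝ), Real.exp_pos (1 : ℝ)]
  have h3 : (8 : ℝ) < Real.exp (3 * K) := h2.trans_le (Real.exp_le_exp.mpr h1)
  have hE : (0 : ℝ) < Real.exp (3 * K) := Real.exp_pos _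
  have hinv : Real.exp (3 * K) * Real.exp (-(3 * K)) = 1 := by
    rw [← Real.exp_add]; norm_num
  nlinarith [Real.exp_pos (-(3 * K))]

open Real in
lemma core_fourier {σ μ : ℝ} (hσ : 0 < σ) (hσ5 : 1 / 5 ≤ σ) (hμ0 : 0 < μ) (hμ2 : μ < 1 / 2) :
    ∑' n : ℤ, Real.exp (-(2 * π ^ 2 * σ ^ 2) * (n : ℝ) ^ 2)
      * (-Real.sin (2 * π * (n : ℝ) * μ) * (2 * π * (n : ℝ))) < 0 := by
  have hπ := Real.pi_pos
  set K : ℝ := 2 * π ^ 2 * σ ^ 2 with hKdef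
  have hK : 0 < K := by positivity
  have hK0 : 2 * π ^ 2 / 25 ≤ K := by
    rw [hKdef]
    have hσ2 : (1 : ℝ) / 25 ≤ σ ^ 2 := by nlinarith
    nlinarith [mul_le_mul_of_nonneg_left hσ2 (by positivity : (0:ℝ) ≤ 2 * π ^ 2)]
  set θ : ℝ := 2 * π * μ with hθdef
  have hθ1 : 0 < θ := by positivity
  have hθ2 : θ < π := by rw [hθdef]; nlinarith
  have hsθ : 0 < Real.sin θ := Real.sin_pos_of_pos_of_lt_pi hθ1 hθ2
  set W : ℤ → ℝ := fun n => Real.exp (-K * (n : ℝ) ^ 2)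
    * (-Real.sin (2 * π * (n : ℝ) * μ) * (2 * π * (n : ℝ))) with hWdef
  set V : ℕ → ℝ := fun n => ((n : ℝ) + 1) * Real.exp (-K * ((n : ℝ) + 1) ^ 2)
    * Real.sin (((n : ℝ) + 1) * θ) with hVdef
  have hWV : ∀ n : ℕ, W ((n : ℤ) + 1) = -(2 * π) * V n := by
    intro n
    simp only [hWdef, hVdef]
    have hc : (((n : ℤ) + 1 : ℤ) : ℝ) = (n : ℝ) + 1 := by push_cast; ring
    rw [hc]
    have harg : 2 * π * ((n : ℝ) + 1) * μ = ((n : ℝ) + 1) * θ := by rw [hθdef]; ring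
    rw [harg]
    ring
  have hWsymm : ∀ n : ℕ, W (-((n : ℤ) + 1)) = W ((n : ℤ) + 1) := by
    intro n
    simp only [hWdef]
    have hc : ((-((n : ℤ) + 1) : ℤ) : ℝ) = -((n : ℝ) + 1) := by push_cast; ring
    have hc2 : (((n : ℤ) + 1 : ℤ) : ℝ) = (n : ℝ) + 1 := by push_cast; ring
    rw [hc, hc2]
    have hs : Real.sin (2 * π * -((n : ℝ) + 1) * μ) = -Real.sin (2 * π * ((n : ℝ) + 1) * μ) := by
      rw [show 2 * π * -((n : ℝ) + 1) * μ = -(2 * π * ((n : ℝ) + 1) * μ) by ring, Real.sin_neg]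
    rw [hs]
    have hsq : (-((n : ℝ) + 1)) ^ 2 = ((n : ℝ) + 1) ^ 2 := by ring
    rw [hsq]
    ring
  -- bound for |V (n+1)|
  have hVbound : ∀ n : ℕ, |V (n + 1)|
      ≤ Real.sin θ * Real.exp (-K) * (4 * Real.exp (-(3 * K))) ^ (n + 1) := by
    intro n
    have hc : (((n + 1 : ℕ)) : ℝ) + 1 = (n : ℝ) + 2 := by push_cast; ring
    simp only [hVdef, hc]
    have hsin : |Real.sin (((n : ℝ) + 2) * θ)| ≤ ((n : ℝ) + 2) * Real.sin θ := by
      have h := sin_bound θ (n + 2)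
      have hc2 : (((n + 2 : ℕ)) : ℝ) = (n : ℝ) + 2 := by push_cast; ring
      rw [hc2] at h
      rwa [abs_of_pos hsθ] at h
    have hn0 : (0 : ℝ) ≤ (n : ℝ) := Nat.cast_nonneg n
    have hexp_pos := Real.exp_pos (-K * ((n : ℝ) + 2) ^ 2)
    rw [abs_mul, abs_mul, Real.abs_exp, abs_of_pos (by linarith : (0:ℝ) < (n : ℝ) + 2)]
    have step1 : ((n : ℝ) + 2) * Real.exp (-K * ((n : ℝ) + 2) ^ 2) * |Real.sin (((n : ℝ) + 2) * θ)|
        ≤ ((n : ℝ) + 2) ^ 2 * Real.exp (-K * ((n : ℝ) + 2) ^ 2) * Real.sin θ := by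
      have := mul_le_mul_of_nonneg_left hsin
        (by positivity : (0:ℝ) ≤ ((n : ℝ) + 2) * Real.exp (-K * ((n : ℝ) + 2) ^ 2))
      nlinarith [this]
    have hexpand : (4 * Real.exp (-(3 * K))) ^ (n + 1)
        = 4 ^ (n + 1) * Real.exp (-(3 * K) * ((n : ℕ) + 1 : ℕ)) := by
      rw [mul_pow, ← Real.exp_nat_mul]
      congr 2
      push_cast
      ring
    have step2 : ((n : ℝ) + 2) ^ 2 * Real.exp (-K * ((n : ℝ) + 2) ^ 2)
        ≤ Real.exp (-K) * (4 * Real.exp (-(3 * K))) ^ (n + 1) := by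
      rw [hexpand]
      have h1 : Real.exp (-K * ((n : ℝ) + 2) ^ 2)
          ≤ Real.exp (-K) * Real.exp (-(3 * K) * ((n : ℕ) + 1 : ℕ)) := by
        rw [← Real.exp_add]
        apply Real.exp_le_exp.mpr
        push_cast
        nlinarith [mul_nonneg (mul_nonneg hK.le hn0) hn0, mul_nonneg hK.le hn0]
      have h2 := pow4_bound n
      calc ((n : ℝ) + 2) ^ 2 * Real.exp (-K * ((n : ℝ) + 2) ^ 2)
          ≤ 4 ^ (n + 1) * (Real.exp (-K) * Real.exp (-(3 * K) * ((n : ℕ) + 1 : ℕ))) :=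
            mul_le_mul h2 h1 (Real.exp_pos _).le (by positivity)
        _ = Real.exp (-K) * (4 ^ (n + 1) * Real.exp (-(3 * K) * ((n : ℕ) + 1 : ℕ))) := by ring
    calc ((n : ℝ) + 2) * Real.exp (-K * ((n : ℝ) + 2) ^ 2) * |Real.sin (((n : ℝ) + 2) * θ)|
        ≤ ((n : ℝ) + 2) ^ 2 * Real.exp (-K * ((n : ℝ) + 2) ^ 2) * Real.sin θ := step1
      _ ≤ (Real.exp (-K) * (4 * Real.exp (-(3 * K))) ^ (n + 1)) * Real.sin θ :=
          mul_le_mul_of_nonneg_right step2 hsθ.le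
      _ = Real.sin θ * Real.exp (-K) * (4 * Real.exp (-(3 * K))) ^ (n + 1) := by ring
  -- geometric facts
  set ρ : ℝ := 4 * Real.exp (-(3 * K)) with hρdef
  have hρpos : 0 < ρ := by positivity
  have hρhalf : ρ < 1 / 2 := rho_lt hK0
  have hρ1 : ρ < 1 := by linarith
  have hgeom_eq : (fun n : ℕ => Real.sin θ * Real.exp (-K) * ρ ^ (n + 1))
      = fun n : ℕ => (Real.sin θ * Real.exp (-K) * ρ) * ρ ^ n := by
    funext n
    rw [pow_succ]
    ring
  have Sg : Summable (fun n : ℕ => Real.sin θ * Real.exp (-K) * ρ ^ (n + 1)) := by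
    rw [hgeom_eq]
    exact (summable_geometric_of_lt_one hρpos.le hρ1).mul_left _
  have SVa : Summable (fun n : ℕ => |V (n + 1)|) :=
    Summable.of_nonneg_of_le (fun n => abs_nonneg _) hVbound Sg
  have SV1 : Summable (fun n : ℕ => V (n + 1)) := SVa.of_abs
  have SV : Summable V := (summable_nat_add_iff 1).mp SV1
  have hgval : ∑' n : ℕ, Real.sin θ * Real.exp (-K) * ρ ^ (n + 1)
      = (Real.sin θ * Real.exp (-K) * ρ) * (1 - ρ)⁻¹ := by
    rw [hgeom_eq, tsum_mul_left, tsum_geometric_of_lt_one hρpos.le hρ1]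
  have htail : |∑' n : ℕ, V (n + 1)| ≤ (Real.sin θ * Real.exp (-K) * ρ) * (1 - ρ)⁻¹ := by
    have h1 : ‖∑' n : ℕ, V (n + 1)‖ ≤ ∑' n : ℕ, ‖V (n + 1)‖ := by
      apply norm_tsum_le_tsum_norm
      exact SVa.congr fun n => (Real.norm_eq_abs _).symm
    rw [Real.norm_eq_abs] at h1
    have h2 : ∑' n : ℕ, ‖V (n + 1)‖ = ∑' n : ℕ, |V (n + 1)| :=
      tsum_congr fun n => Real.norm_eq_abs _
    rw [h2] at h1
    exact h1.trans ((Summable.tsum_le_tsum hVbound SVa Sg).trans_eq hgval)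
  have hV0 : V 0 = Real.exp (-K) * Real.sin θ := by
    simp only [hVdef]
    norm_num
  have hρinv : (1 - ρ)⁻¹ ≤ 2 := by
    rw [inv_le_comm₀ (by linarith) (by norm_num)]
    linarith
  have hfrac : (Real.sin θ * Real.exp (-K) * ρ) * (1 - ρ)⁻¹ < Real.exp (-K) * Real.sin θ := by
    have hC : 0 < Real.sin θ * Real.exp (-K) := by positivity
    have step : (Real.sin θ * Real.exp (-K) * ρ) * (1 - ρ)⁻¹
        ≤ (Real.sin θ * Real.exp (-K)) * (ρ * 2) := by
      have : ρ * (1 - ρ)⁻¹ ≤ ρ * 2 := mul_le_mul_of_nonneg_left hρinv hρpos.le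
      calc (Real.sin θ * Real.exp (-K) * ρ) * (1 - ρ)⁻¹
          = (Real.sin θ * Real.exp (-K)) * (ρ * (1 - ρ)⁻¹) := by ring
        _ ≤ (Real.sin θ * Real.exp (-K)) * (ρ * 2) := mul_le_mul_of_nonneg_left this hC.le
    have : (Real.sin θ * Real.exp (-K)) * (ρ * 2) < (Real.sin θ * Real.exp (-K)) * 1 := by
      apply mul_lt_mul_of_pos_left _ hC
      linarith
    calc (Real.sin θ * Real.exp (-K) * ρ) * (1 - ρ)⁻¹
        ≤ (Real.sin θ * Real.exp (-K)) * (ρ * 2) := step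
      _ < (Real.sin θ * Real.exp (-K)) * 1 := this
      _ = Real.exp (-K) * Real.sin θ := by ring
  have hVpos : 0 < ∑' n : ℕ, V n := by
    rw [Summable.tsum_eq_zero_add SV, hV0]
    have h1 : -(Real.exp (-K) * Real.sin θ) < ∑' n : ℕ, V (n + 1) := by
      linarith [neg_abs_le (∑' n : ℕ, V (n + 1)), htail, hfrac]
    linarith
  -- assemble the ℤ-sum
  have SW1 : Summable (fun n : ℕ => W ((n : ℤ) + 1)) :=
    (SV.mul_left (-(2 * π))).congr fun n => (hWV n).symm
  have SW2 : Summable (fun n : ℕ => W (-((n : ℤ) + 1))) :=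
    SW1.congr fun n => (hWsymm n).symm
  have hsplit := tsum_of_add_one_of_neg_add_one (f := W) SW1 SW2
  have hW0 : W (0 : ℤ) = 0 := by
    simp only [hWdef]
    norm_num
  have hWt : ∑' n : ℕ, W ((n : ℤ) + 1) = -(2 * π) * ∑' n : ℕ, V n := by
    rw [tsum_congr hWV, tsum_mul_left]
  have hWneg : ∑' n : ℕ, W (-((n : ℤ) + 1)) = -(2 * π) * ∑' n : ℕ, V n := by
    rw [tsum_congr hWsymm, hWt]
  rw [hsplit, hW0, hWt, hWneg]
  nlinarith [hVpos, Real.pi_pos]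

open Real in
lemma branch_real {σ μ : ℝ} (hσ : 0 < σ) (hσ5 : σ ≤ 1 / 5) (hμ0 : 0 < μ) (hμ2 : μ < 1 / 2) :
    deriv (fun m : ℝ => ∑' x : ℤ, Real.exp (-((x : ℝ) - m) ^ 2 / (2 * σ ^ 2))) μ < 0 := by
  rw [(deriv_tsum_real hσ (by linarith) (by linarith)).deriv]
  have factor : (fun x : ℤ => ((x : ℝ) - μ) / σ ^ 2 * Real.exp (-((x : ℝ) - μ) ^ 2 / (2 * σ ^ 2)))
      = fun x : ℤ => (1 / σ ^ 2) * (((x : ℝ) - μ) * Real.exp (-((x : ℝ) - μ) ^ 2 / (2 * σ ^ 2))) := by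
    funext x
    ring
  rw [factor, tsum_mul_left]
  exact mul_neg_of_pos_of_neg (by positivity) (core_real hσ hσ5 hμ0 hμ2)

open Real in
lemma branch_fourier {σ μ : ℝ} (hσ : 0 < σ) (hσ5 : 1 / 5 ≤ σ) (hμ0 : 0 < μ) (hμ2 : μ < 1 / 2) :
    deriv (fun m : ℝ => ∑' x : ℤ, Real.exp (-((x : ℝ) - m) ^ 2 / (2 * σ ^ 2))) μ < 0 := by
  have hEq : (fun m : ℝ => ∑' x : ℤ, Real.exp (-((x : ℝ) - m) ^ 2 / (2 * σ ^ 2)))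
      =ᶠ[nhds μ] (fun m : ℝ => Real.sqrt (2 * π * σ ^ 2) *
        ∑' n : ℤ, Real.exp (-(2 * π ^ 2 * σ ^ 2) * (n : ℝ) ^ 2) * Real.cos (2 * π * (n : ℝ) * m)) := by
    filter_upwards [Ioo_mem_nhds (by linarith : (-1 : ℝ) < μ) (by linarith : μ < 1)] with m hm
    exact poisson hσ hm.1 hm.2
  rw [hEq.deriv_eq]
  rw [((deriv_tsum_fourier hσ μ).const_mul (Real.sqrt (2 * π * σ ^ 2))).deriv]
  exact mul_neg_of_pos_of_neg (Real.sqrt_pos.mpr (by positivity))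
    (core_fourier hσ hσ5 hμ0 hμ2)

theorem theta_sum_deriv_neg (σ : ℝ) (hσ : 0 < σ) (μ : ℝ)
    (hμ : μ ∈ Set.Ioo (0 : ℝ) (1/2)) :
    deriv (fun m : ℝ => ∑' x : ℤ, Real.exp (-((x : ℝ) - m)^2 / (2 * σ^2))) μ < 0 := by
  obtain ⟨hμ0, hμ2⟩ := hμ
  rcases le_total σ (1 / 5) with h | h
  · exact branch_real hσ h hμ0 (by linarith)
  · exact branch_fourier hσ h hμ0 (by linarith)
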